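/- Let (X, τ) be a hereditarily normal T1 space such that X = ⋃_{i∈I} X_i, where each subspace X_i of (X, τ) satisfies ind X_i ≤ 0 (every point of X_i has a neighborhood basis in X_i of relatively clopen sets). Then τ = ⋂_{i∈I} τ(X_i) and, for each i ∈ I, the space (X, τ(X_i)) is hereditarily normal with ind (X, τ(X_i)) ≤ 0. -/
import Mathlib


/-- The Bing–Hanner extension `τ(M)` of a topology `τ` on `X` determined by a subset `M ⊆ X`:
its open sets are exactly the sets of the form `U ∪ K` with `U` a `τ`-open set and
`K ⊆ X \ M`. -/
def bingHanner {X : Type*} (τ : TopologicalSpace X) (M : Set X) : TopologicalSpace X where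
  IsOpen O := ∃ U K : Set X, τ.IsOpen U ∧ K ⊆ Mᶜ ∧ O = U ∪ K
  isOpen_univ := ⟨Set.univ, ∅, τ.isOpen_univ, by simp, by simp⟩
  isOpen_inter := by
    rintro s t ⟨U₁, K₁, hU₁, hK₁, rfl⟩ ⟨U₂, K₂, hU₂, hK₂, rfl⟩
    refine ⟨U₁ ∩ U₂, ((U₁ ∪ K₁) ∩ (U₂ ∪ K₂)) \ (U₁ ∩ U₂),
      τ.isOpen_inter _ _ hU₁ hU₂, ?_, ?_⟩
    · rintro x ⟨⟨h1, h2⟩, hn⟩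
      rcases h1 with h1 | h1
      · rcases h2 with h2 | h2
        · exact absurd ⟨h1, h2⟩ hn
        · exact hK₂ h2
      · exact hK₁ h1
    · have hsub : U₁ ∩ U₂ ⊆ (U₁ ∪ K₁) ∩ (U₂ ∪ K₂) :=
        fun x hx => ⟨Or.inl hx.1, Or.inl hx.2⟩
      exact (Set.union_diff_cancel hsub).symm
  isOpen_sUnion := by
    intro S hS
    choose U K hU hK hEq using hS
    refine ⟨⋃ s, ⋃ h : s ∈ S, U s h, ⋃ s, ⋃ h : s ∈ S, K s h, ?_, ?_, ?_⟩
    · letI := τ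
      exact isOpen_iUnion fun s => isOpen_iUnion fun h => hU s h
    · exact Set.iUnion_subset fun s => Set.iUnion_subset fun h => hK s h
    · ext x
      simp only [Set.mem_sUnion, Set.mem_union, Set.mem_iUnion]
      constructor
      · rintro ⟨s, hs, hx⟩
        rw [hEq s hs] at hx
        rcases hx with hx | hx
        · exact Or.inl ⟨s, hs, hx⟩
        · exact Or.inr ⟨s, hs, hx⟩
      · rintro (⟨s, hs, hx⟩ | ⟨s, hs, hx⟩)
        · exact ⟨s, hs, by rw [hEq s hs]; exact Or.inl hx⟩
        · exact ⟨s, hs, by rw [hEq s hs]; exact Or.inr hx⟩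

section BH
variable {X : Type*}

lemma bh_le (τ : TopologicalSpace X) (M : Set X) {O : Set X} (h : τ.IsOpen O) :
    (bingHanner τ M).IsOpen O :=
  ⟨O, ∅, h, by simp, by simp⟩

lemma bh_open_of_subset (τ : TopologicalSpace X) (M : Set X) {K : Set X} (h : K ⊆ Mᶜ) :
    (bingHanner τ M).IsOpen K :=
  ⟨∅, K, by letI := τ; exact isOpen_empty, h, by simp⟩

lemma bh_closed (τ : TopologicalSpace X) (M : Set X) {A : Set X} (h : @IsClosed X τ A) :
    @IsClosed X (bingHanner τ M) A :=
  @IsClosed.mk X (bingHanner τ M) A (bh_le τ M h.isOpen_compl)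

lemma bh_closed_of (τ : TopologicalSpace X) (M : Set X) {G H : Set X} (hH : τ.IsOpen H)
    (hGH : G ∩ H = ∅) (hMG : M \ G ⊆ H) : @IsClosed X (bingHanner τ M) G := by
  have heq : Gᶜ = H ∪ Gᶜ ∩ Mᶜ := by
    ext y
    simp only [Set.mem_compl_iff, Set.mem_union, Set.mem_inter_iff]
    constructor
    · intro hy
      by_cases hyM : y ∈ M
      · exact Or.inl (hMG ⟨hyM, hy⟩)
      · exact Or.inr ⟨hy, hyM⟩
    · rintro (hy | ⟨hy, _⟩) hyG
      · have : y ∈ G ∩ H := ⟨hyG, hy⟩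
        rw [hGH] at this
        exact this
      · exact hy hyG
  have hop : ∃ U K : Set X, τ.IsOpen U ∧ K ⊆ Mᶜ ∧ Gᶜ = U ∪ K :=
    ⟨H, Gᶜ ∩ Mᶜ, hH, Set.inter_subset_right, heq⟩
  exact @IsClosed.mk X (bingHanner τ M) G hop

lemma bh_closure_inter (τ : TopologicalSpace X) (M : Set X) (s : Set X) :
    (@closure X τ s) ∩ M ⊆ @closure X (bingHanner τ M) s := by
  rintro y ⟨hy, hyM⟩
  have key : ∀ o, (bingHanner τ M).IsOpen o → y ∈ o → (o ∩ s).Nonempty := by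
    rintro O ⟨U, K, hU, hK, rfl⟩ hyO
    have hyU : y ∈ U := by
      rcases hyO with h | h
      · exact h
      · exact absurd hyM (hK h)
    have h2 : (U ∩ s).Nonempty := by
      letI := τ
      exact mem_closure_iff.mp hy U hU hyU
    exact h2.mono (Set.inter_subset_inter_left _ Set.subset_union_left)
  letI := bingHanner τ M
  exact mem_closure_iff.mpr key

end BH


/-- `covDimLE t n` : the covering dimension of `(X, t)` is at most `n`, i.e. every finite
open cover admits a finite open refinement covering `X` in which any `n + 2` pairwise
distinct members have empty intersection. -/
def covDimLE {X : Type*} (t : TopologicalSpace X) (n : ℕ) : Prop :=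
  ∀ C : Set (Set X), C.Finite → (∀ U ∈ C, t.IsOpen U) → ⋃₀ C = Set.univ →
    ∃ V : Set (Set X), V.Finite ∧ (∀ U ∈ V, t.IsOpen U) ∧ ⋃₀ V = Set.univ ∧
      (∀ U ∈ V, ∃ W ∈ C, U ⊆ W) ∧
      ∀ F : Finset (Set X), ↑F ⊆ V → F.card = n + 2 → ⋂₀ (F : Set (Set X)) = ∅

/-- `IndLE0 t` : the large inductive dimension of `(Z, t)` is at most `0`, i.e. any two
disjoint closed sets are separated by a clopen set. -/
def IndLE0 {Z : Type*} (t : TopologicalSpace Z) : Prop :=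
  ∀ A B : Set Z, @IsClosed Z t A → @IsClosed Z t B → Disjoint A B →
    ∃ U : Set Z, t.IsOpen U ∧ @IsClosed Z t U ∧ A ⊆ U ∧ U ∩ B = ∅

/-- `indLE0 t` : the small inductive dimension of `(Z, t)` is at most `0`, i.e. every point
has a neighborhood basis of clopen sets. -/
def indLE0 {Z : Type*} (t : TopologicalSpace Z) : Prop :=
  ∀ (x : Z) (O : Set Z), t.IsOpen O → x ∈ O →
    ∃ U : Set Z, t.IsOpen U ∧ @IsClosed Z t U ∧ x ∈ U ∧ U ⊆ O

/-- `L` is a partition between `A` and `B` in `(X, t)`. -/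
def isPartitionBetween {X : Type*} (t : TopologicalSpace X) (A B L : Set X) : Prop :=
  ∃ U V : Set X, t.IsOpen U ∧ t.IsOpen V ∧ Disjoint U V ∧ A ⊆ U ∧ B ⊆ V ∧ L = (U ∪ V)ᶜ

/-- If `(X, τ)` is hereditarily normal `T₁` and `X = ⋃_{i ∈ I} X_i`
with each subspace `X_i` satisfying `ind X_i ≤ 0`, then `τ = ⋂_{i ∈ I} τ(X_i)` and each
`(X, τ(X_i))` is hereditarily normal with `ind ≤ 0`. -/
theorem hereditarilyNormal_indZero_decomposition {X : Type*} (τ : TopologicalSpace X)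
    (hT5 : @T5Space X τ) {I : Type*} (Xi : I → Set X)
    (hcover : (⋃ i, Xi i) = Set.univ)
    (hind : ∀ i, indLE0 (TopologicalSpace.induced (Subtype.val : (Xi i) → X) τ)) :
    (∀ O : Set X, τ.IsOpen O ↔ ∀ i, (bingHanner τ (Xi i)).IsOpen O) ∧
    ∀ i, @T5Space X (bingHanner τ (Xi i)) ∧ indLE0 (bingHanner τ (Xi i)) := by
  constructor
  · intro O
    constructor
    · intro h i
      exact bh_le τ (Xi i) h
    · intro h
      letI := τ
      have hO : IsOpen O := by
        rw [isOpen_iff_forall_mem_open]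
        intro x hx
        have hxU : x ∈ ⋃ i, Xi i := hcover ▸ Set.mem_univ x
        obtain ⟨i, hxi⟩ := Set.mem_iUnion.mp hxU
        obtain ⟨U, K, hU, hK, hOeq⟩ := h i
        refine ⟨U, ?_, hU, ?_⟩
        · rw [hOeq]; exact Set.subset_union_left
        · rw [hOeq] at hx
          rcases hx with h' | h'
          · exact h'
          · exact absurd hxi (hK h')
      exact hO
  · intro i
    set M := Xi i with hM
    have hT1' : @T1Space X (bingHanner τ M) :=
      @T1Space.mk X (bingHanner τ M) fun x =>
        bh_closed τ M (by letI := τ; haveI := hT5.toT1Space; exact isClosed_singleton)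
    refine ⟨?_, ?_⟩
    · -- T5
      have hCN : @CompletelyNormalSpace X (bingHanner τ M) := by
        refine @CompletelyNormalSpace.mk X (bingHanner τ M) ?_
        intro s t h1 h2
        rw [← @separatedNhds_iff_disjoint X (bingHanner τ M)]
        have hsub_s : s ⊆ @closure X (bingHanner τ M) s := by
          letI := bingHanner τ M; exact subset_closure
        have hsub_t : t ⊆ @closure X (bingHanner τ M) t := by
          letI := bingHanner τ M; exact subset_closure
        have hst : Disjoint s t := h2.mono_right hsub_t
        have hs1 : Disjoint ((@closure X τ s) ∩ M) t := h1.mono_left (bh_closure_inter τ M s)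
        have ht1 : Disjoint s ((@closure X τ t) ∩ M) := h2.mono_right (bh_closure_inter τ M t)
        have hd1 : Disjoint (@closure X τ (s ∩ M)) (t ∩ M) := by
          rw [Set.disjoint_left]
          intro a ha hat
          have hcl : a ∈ @closure X τ s :=
            (by letI := τ; exact closure_mono Set.inter_subset_left : @closure X τ (s ∩ M) ⊆ @closure X τ s) ha
          exact Set.disjoint_left.mp hs1 ⟨hcl, hat.2⟩ hat.1
        have hd2 : Disjoint (s ∩ M) (@closure X τ (t ∩ M)) := by
          rw [Set.disjoint_right]
          intro a ha hat
          have hcl : a ∈ @closure X τ t :=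
            (by letI := τ; exact closure_mono Set.inter_subset_left : @closure X τ (t ∩ M) ⊆ @closure X τ t) ha
          exact Set.disjoint_right.mp ht1 ⟨hcl, hat.2⟩ hat.1
        obtain ⟨G, H, hG, hH, hsG, htH, hGH⟩ := by
          letI := τ
          exact separatedNhds_iff_disjoint.mpr
            (@CompletelyNormalSpace.completely_normal X τ hT5.toCompletelyNormalSpace
              (s ∩ M) (t ∩ M) hd1 hd2)
        set Cs := @closure X (bingHanner τ M) s with hCs
        set Ct := @closure X (bingHanner τ M) t with hCt
        refine ⟨(G \ Ct) ∪ (s \ M), (H \ Cs) ∪ (t \ M), ?_, ?_, ?_, ?_, ?_⟩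
        · letI := bingHanner τ M
          have hGo : IsOpen G := bh_le τ M hG
          have hKo : IsOpen (s \ M) := bh_open_of_subset τ M fun a ha => ha.2
          exact (hGo.sdiff isClosed_closure).union hKo
        · letI := bingHanner τ M
          have hHo : IsOpen H := bh_le τ M hH
          have hKo : IsOpen (t \ M) := bh_open_of_subset τ M fun a ha => ha.2
          exact (hHo.sdiff isClosed_closure).union hKo
        · intro a ha
          by_cases haM : a ∈ M
          · exact Or.inl ⟨hsG ⟨ha, haM⟩, fun hc => Set.disjoint_left.mp h2 ha hc⟩
          · exact Or.inr ⟨ha, haM⟩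
        · intro a ha
          by_cases haM : a ∈ M
          · exact Or.inl ⟨htH ⟨ha, haM⟩, fun hc => Set.disjoint_right.mp h1 ha hc⟩
          · exact Or.inr ⟨ha, haM⟩
        · rw [Set.disjoint_left]
          rintro a (⟨haG, haCt⟩ | ⟨has, _⟩) (⟨haH, haCs⟩ | ⟨hat, _⟩)
          · exact Set.disjoint_left.mp hGH haG haH
          · exact haCt (hsub_t hat)
          · exact haCs (hsub_s has)
          · exact Set.disjoint_left.mp hst has hat
      exact @T5Space.mk X (bingHanner τ M) hT1' hCN
    · -- indLE0
      rintro x O ⟨U, K, hU, hK, rfl⟩ hx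
      by_cases hxM : x ∈ M
      · have hxU : x ∈ U := by
          rcases hx with h | h
          · exact h
          · exact absurd hxM (hK h)
        have hop : (TopologicalSpace.induced (Subtype.val : M → X) τ).IsOpen
            ((Subtype.val : M → X) ⁻¹' U) := ⟨U, hU, rfl⟩
        obtain ⟨V, hVo, hVc, hxV, hVU⟩ := hind i ⟨x, hxM⟩ _ hop hxU
        obtain ⟨W, hW, hWV⟩ := hVo
        obtain ⟨C', hC', hCV⟩ := hVc.isOpen_compl
        set V' := (Subtype.val : M → X) '' V with hV'
        have hV'M : V' ⊆ M := by rintro _ ⟨v, hv, rfl⟩; exact v.2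
        have hV'U : V' ⊆ U := by rintro _ ⟨v, hv, rfl⟩; exact hVU hv
        have hV'W : V' ⊆ W := by
          rintro _ ⟨v, hv, rfl⟩
          rw [← hWV] at hv
          exact hv
        have hWM : ∀ y, y ∈ M → y ∈ W → y ∈ V' := by
          intro y hyM hyW
          exact ⟨⟨y, hyM⟩, by rw [← hWV]; exact hyW, rfl⟩
        have hV'C : V' ⊆ C'ᶜ := by
          rintro _ ⟨v, hv, rfl⟩ hc
          have : v ∈ (Subtype.val ⁻¹' C') := hc
          rw [hCV] at this
          exact this hv
        have hCM : ∀ y, y ∈ M → y ∉ C' → y ∈ V' := by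
          intro y hyM hyC
          have : (⟨y, hyM⟩ : M) ∈ (Subtype.val ⁻¹' C')ᶜ := hyC
          rw [hCV, compl_compl] at this
          exact ⟨⟨y, hyM⟩, this, rfl⟩
        have h1 : Disjoint (@closure X τ V') (M \ V') := by
          rw [Set.disjoint_left]
          intro a ha ⟨haM, haV⟩
          have hcl : @closure X τ V' ⊆ C'ᶜ := by
            letI := τ
            exact closure_minimal hV'C hC'.isClosed_compl
          exact haV (hCM a haM (hcl ha))
        have h2 : Disjoint V' (@closure X τ (M \ V')) := by
          rw [Set.disjoint_right]
          intro a ha hav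
          have hsub : M \ V' ⊆ Wᶜ := fun y ⟨hyM, hyV⟩ hyW => hyV (hWM y hyM hyW)
          have hcl : @closure X τ (M \ V') ⊆ Wᶜ := by
            letI := τ
            exact closure_minimal hsub hW.isClosed_compl
          exact hcl ha (hV'W hav)
        obtain ⟨G₀, H, hG₀, hH, hVG, hMH, hGH⟩ := by
          letI := τ
          exact separatedNhds_iff_disjoint.mpr
            (@CompletelyNormalSpace.completely_normal X τ hT5.toCompletelyNormalSpace
              V' (M \ V') h1 h2)
        have hxV' : x ∈ V' := ⟨⟨x, hxM⟩, hxV, rfl⟩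
        refine ⟨G₀ ∩ U, bh_le τ M (τ.isOpen_inter _ _ hG₀ hU), ?_, ⟨hVG hxV', hxU⟩,
          fun a ha => Or.inl ha.2⟩
        refine bh_closed_of τ M hH ?_ ?_
        · rw [Set.eq_empty_iff_forall_notMem]
          rintro a ⟨⟨haG, _⟩, haH⟩
          exact Set.disjoint_left.mp hGH haG haH
        · rintro a ⟨haM, haG⟩
          by_cases haV : a ∈ V'
          · exact absurd ⟨hVG haV, hV'U haV⟩ haG
          · exact hMH ⟨haM, haV⟩
      · refine ⟨{x}, bh_open_of_subset τ M (by simpa using hxM), ?_, rfl, ?_⟩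
        · exact bh_closed τ M (by letI := τ; haveI := hT5.toT1Space; exact isClosed_singleton)
        · simpa using hx
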